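/- Assume v : ℝ≥0 → ℝ is C¹ with v' < 0 on (0,∞) and ρ v'(ρ) non-increasing. Let R(t) > 0 solve Ṙ = −(R²/ℓ)[v_max − v(R)] where v_max = v(0). Define z(t) = t · R(t) · [v_max − v(R(t))]. Then z(0) = 0 and z(t) ≤ ℓ for all t ≥ 0. -/

import Mathlib

/-- Base case of the discrete Oleinik estimate: for the leading density `R` solving
`Ṙ = -(R²/ℓ)[v_max - v(R)]` with `v_max = v(0)`, the quantity
`z(t) = t · R(t) · [v_max - v(R(t))]` satisfies `z(0) = 0` and `z(t) ≤ ℓ` for `t ≥ 0`. -/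
theorem ftl_oleinik_base_case
    (v : ℝ → ℝ) (hv : ContDiffOn ℝ 1 v (Set.Ici 0))
    (hv' : ∀ ρ : ℝ, 0 < ρ → deriv v ρ < 0)
    (hv2 : AntitoneOn (fun ρ => ρ * deriv v ρ) (Set.Ici 0))
    (ℓ : ℝ) (hℓ : 0 < ℓ)
    (R : ℝ → ℝ) (hpos : ∀ t ≥ (0:ℝ), 0 < R t)
    (hode : ∀ t ≥ (0:ℝ), HasDerivAt R (-(R t)^2 / ℓ * (v 0 - v (R t))) t)
    (z : ℝ → ℝ) (hz : ∀ t, z t = t * R t * (v 0 - v (R t))) :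
    z 0 = 0 ∧ ∀ t ≥ (0:ℝ), z t ≤ ℓ := by
  have hz0 : z 0 = 0 := by rw [hz]; ring
  refine ⟨hz0, ?_⟩
  -- v is antitone on [0,∞)
  have hvdiff : DifferentiableOn ℝ v (Set.Ici 0) := hv.differentiableOn one_ne_zero
  have hanti : AntitoneOn v (Set.Ici (0:ℝ)) := by
    apply antitoneOn_of_deriv_nonpos (convex_Ici 0) hv.continuousOn
    · exact hvdiff.mono interior_subset
    · intro x hx
      rw [interior_Ici] at hx
      exact (hv' x hx).le
  have ha : ∀ t ≥ (0:ℝ), 0 ≤ v 0 - v (R t) := by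
    intro t ht
    have := hanti (Set.self_mem_Ici) (Set.mem_Ici.mpr (hpos t ht).le) (hpos t ht).le
    linarith
  -- auxiliary function
  set w : ℝ → ℝ := fun t => (ℓ - t * R t * (v 0 - v (R t))) / R t with hw
  -- derivative of w at interior points
  have hwderiv : ∀ x ∈ Set.Ioi (0:ℝ), HasDerivAt w
      (((0 - ((1 * R x + x * (-(R x)^2 / ℓ * (v 0 - v (R x)))) * (v 0 - v (R x)) +
          x * R x * (0 - deriv v (R x) * (-(R x)^2 / ℓ * (v 0 - v (R x)))))) * R x -
        (ℓ - x * R x * (v 0 - v (R x))) * (-(R x)^2 / ℓ * (v 0 - v (R x)))) / (R x)^2) x := by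
    intro x hx
    have hx0 : (0:ℝ) ≤ x := le_of_lt hx
    have hR := hode x hx0
    have hRx : 0 < R x := hpos x hx0
    have hvat : DifferentiableAt ℝ v (R x) :=
      (hvdiff.differentiableAt (Ici_mem_nhds hRx))
    have hvR : HasDerivAt (fun t => v (R t)) (deriv v (R x) * (-(R x)^2 / ℓ * (v 0 - v (R x)))) x :=
      hvat.hasDerivAt.comp x hR
    have hZ : HasDerivAt (fun t => t * R t * (v 0 - v (R t)))
        ((1 * R x + x * (-(R x)^2 / ℓ * (v 0 - v (R x)))) * (v 0 - v (R x)) +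
          x * R x * (0 - deriv v (R x) * (-(R x)^2 / ℓ * (v 0 - v (R x))))) x :=
      ((hasDerivAt_id x).mul hR).mul ((hasDerivAt_const x (v 0)).sub hvR)
    exact ((hasDerivAt_const x ℓ).sub hZ).div hR (ne_of_gt hRx)
  -- the derivative is nonnegative
  have hderiv_nonneg : ∀ x ∈ Set.Ioi (0:ℝ), 0 ≤
      (((0 - ((1 * R x + x * (-(R x)^2 / ℓ * (v 0 - v (R x)))) * (v 0 - v (R x)) +
          x * R x * (0 - deriv v (R x) * (-(R x)^2 / ℓ * (v 0 - v (R x)))))) * R x -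
        (ℓ - x * R x * (v 0 - v (R x))) * (-(R x)^2 / ℓ * (v 0 - v (R x)))) / (R x)^2) := by
    intro x hx
    have hx0 : (0:ℝ) ≤ x := le_of_lt hx
    have hRx : 0 < R x := hpos x hx0
    have haa : 0 ≤ v 0 - v (R x) := ha x hx0
    have hd : deriv v (R x) < 0 := hv' (R x) hRx
    have key : (((0 - ((1 * R x + x * (-(R x)^2 / ℓ * (v 0 - v (R x)))) * (v 0 - v (R x)) +
          x * R x * (0 - deriv v (R x) * (-(R x)^2 / ℓ * (v 0 - v (R x)))))) * R x -
        (ℓ - x * R x * (v 0 - v (R x))) * (-(R x)^2 / ℓ * (v 0 - v (R x)))) / (R x)^2)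
        = x * (R x)^2 * (v 0 - v (R x)) * (-(deriv v (R x))) / ℓ := by
      field_simp
      ring
    rw [key]
    apply div_nonneg _ hℓ.le
    have : 0 ≤ -(deriv v (R x)) := by linarith
    positivity
  -- continuity of w on [0,∞)
  have hRc : ContinuousOn R (Set.Ici 0) := fun t ht =>
    (hode t ht).continuousAt.continuousWithinAt
  have hvRc : ContinuousOn (fun t => v (R t)) (Set.Ici 0) :=
    hv.continuousOn.comp hRc (fun t ht => Set.mem_Ici.mpr (hpos t ht).le)
  have hwc : ContinuousOn w (Set.Ici 0) := by
    apply ContinuousOn.div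
    · exact continuousOn_const.sub ((continuousOn_id.mul hRc).mul
        (continuousOn_const.sub hvRc))
    · exact hRc
    · exact fun t ht => ne_of_gt (hpos t ht)
  -- w is monotone on [0,∞)
  have hmono : MonotoneOn w (Set.Ici 0) := by
    apply monotoneOn_of_deriv_nonneg (convex_Ici 0) hwc
    · intro x hx
      rw [interior_Ici] at hx
      exact (hwderiv x hx).differentiableAt.differentiableWithinAt
    · intro x hx
      rw [interior_Ici] at hx
      rw [(hwderiv x hx).deriv]
      exact hderiv_nonneg x hx
  -- conclude
  intro t ht
  have h0 : w 0 = ℓ / R 0 := by simp [hw]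
  have hle : w 0 ≤ w t := hmono Set.self_mem_Ici (Set.mem_Ici.mpr ht) ht
  have hR0 : 0 < R 0 := hpos 0 le_rfl
  have hwt : 0 < w t := lt_of_lt_of_le (by rw [h0]; positivity) hle
  have hRt : 0 < R t := hpos t ht
  have : 0 < ℓ - t * R t * (v 0 - v (R t)) := by
    have := (div_pos_iff.mp hwt)
    rcases this with ⟨h1, _⟩ | ⟨_, h2⟩
    · exact h1
    · linarith
  rw [hz]
  linarith
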